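/- Let ω = (ω₁, ω₂) ∈ ℝ² with 0 < ω₂ < ω₁ and α = ω₂/ω₁ irrational. Then ω is a Bryuno vector (i.e. B(ω) = Σ_{n≥0} 2^{-n} log(1/α_n(ω)) < ∞) if and only if D(ω) := Σ_{n=0}^∞ (log q_{n+1})/q_n < ∞, where (q_n) are the denominators of the convergents of α. -/

import Mathlib

open GenContFract

/-- `alphan2 ω n = inf { |ω·ν| : ν ∈ ℤ², 0 < |ν₁|+|ν₂| ≤ 2^n }`. -/
noncomputable def alphan2 (ω : ℝ × ℝ) (n : ℕ) : ℝ :=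
  sInf {x : ℝ | ∃ ν : ℤ × ℤ, ν ≠ 0 ∧ |ν.1| + |ν.2| ≤ 2 ^ n ∧
    x = |ω.1 * (ν.1 : ℝ) + ω.2 * (ν.2 : ℝ)|}

namespace BryunoAux


variable {v : ℝ}

theorem not_terminatedAt (hirr : Irrational v) (n : ℕ) :
    ¬(GenContFract.of v).TerminatedAt n := by
  intro h
  have hterm : (GenContFract.of v).Terminates := ⟨n, h⟩
  obtain ⟨q, rfl⟩ := (GenContFract.terminates_iff_rat v).1 hterm
  exact hirr ⟨q, rfl⟩

theorem exists_s_get (hirr : Irrational v) (n : ℕ) :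
    ∃ gp, (GenContFract.of v).s.get? n = some gp ∧ gp.a = 1 ∧ ∃ z : ℤ, gp.b = (z : ℝ) ∧ 1 ≤ z := by
  obtain ⟨gp, hgp⟩ := Option.ne_none_iff_exists'.1 (not_terminatedAt hirr n)
  refine ⟨gp, hgp, of_partNum_eq_one (partNum_eq_s_a hgp), ?_⟩
  obtain ⟨z, hz⟩ := exists_int_eq_of_partDen (partDen_eq_s_b hgp)
  refine ⟨z, hz, ?_⟩
  have h1 : (1 : ℝ) ≤ gp.b := of_one_le_get?_partDen (partDen_eq_s_b hgp)
  rw [hz] at h1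
  exact_mod_cast h1

theorem exists_int_num_den (hirr : Irrational v) (n : ℕ) :
    (∃ z : ℤ, (GenContFract.of v).nums n = (z : ℝ)) ∧
      (∃ z : ℤ, (GenContFract.of v).dens n = (z : ℝ)) := by
  induction n using Nat.strong_induction_on with
  | _ n ih =>
    match n with
    | 0 => exact ⟨⟨⌊v⌋, by rw [zeroth_num_eq_h, of_h_eq_floor]⟩, ⟨1, by simp [zeroth_den_eq_one]⟩⟩
    | 1 =>
      obtain ⟨gp, hgp, ha, z, hb, hz1⟩ := exists_s_get hirr 0
      constructor
      · exact ⟨z * ⌊v⌋ + 1, by rw [first_num_eq hgp, ha, of_h_eq_floor, hb]; push_cast; ring⟩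
      · exact ⟨z, by rw [first_den_eq hgp, hb]⟩
    | (n + 2) =>
      obtain ⟨⟨a0, ha0⟩, ⟨b0, hb0⟩⟩ := ih n (by omega)
      obtain ⟨⟨a1, ha1⟩, ⟨b1, hb1⟩⟩ := ih (n + 1) (by omega)
      obtain ⟨gp, hgp, ha, z, hb, hz1⟩ := exists_s_get hirr (n + 1)
      constructor
      · exact ⟨z * a1 + a0, by
          rw [nums_recurrence hgp ha0 ha1, ha, hb]; push_cast; ring⟩
      · exact ⟨z * b1 + b0, by
          rw [dens_recurrence hgp hb0 hb1, ha, hb]; push_cast; ring⟩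


/-- the error term `v qₙ - pₙ` -/
noncomputable def err (v : ℝ) (n : ℕ) : ℝ :=
  v * (GenContFract.of v).dens n - (GenContFract.of v).nums n

theorem one_le_dens (hirr : Irrational v) (n : ℕ) : (1 : ℝ) ≤ (GenContFract.of v).dens n := by
  have h := succ_nth_fib_le_of_nth_den (v := v) (n := n) (Or.inr (not_terminatedAt hirr _))
  have h1 : (1 : ℕ) ≤ Nat.fib (n + 1) := Nat.fib_pos.2 n.succ_pos
  calc (1:ℝ) ≤ (Nat.fib (n+1) : ℝ) := by exact_mod_cast h1
    _ ≤ _ := h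

theorem dens_pos (hirr : Irrational v) (n : ℕ) : (0 : ℝ) < (GenContFract.of v).dens n :=
  lt_of_lt_of_le one_pos (one_le_dens hirr n)

theorem dens_mono (hirr : Irrational v) : Monotone fun n => (GenContFract.of v).dens n :=
  monotone_nat_of_le_succ fun _ => of_den_mono

theorem dens_add_le (hirr : Irrational v) (n : ℕ) :
    (GenContFract.of v).dens n + (GenContFract.of v).dens (n + 1) ≤
      (GenContFract.of v).dens (n + 2) := by
  obtain ⟨gp, hgp, ha, z, hb, hz1⟩ := exists_s_get hirr (n + 1)
  have hrec := dens_recurrence (g := GenContFract.of v) hgp rfl rfl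
  have hb1 : (1 : ℝ) ≤ gp.b := by rw [hb]; exact_mod_cast hz1
  have h0 : (0:ℝ) < (GenContFract.of v).dens (n+1) := dens_pos hirr _
  rw [hrec, ha]
  nlinarith

theorem two_mul_dens_le (hirr : Irrational v) (n : ℕ) :
    2 * (GenContFract.of v).dens n ≤ (GenContFract.of v).dens (n + 2) := by
  have h := dens_add_le hirr n
  have h2 := dens_mono hirr (Nat.le_succ n)
  simp only at h2
  linarith

theorem pow_le_dens (hirr : Irrational v) (j : ℕ) :
    (2 : ℝ) ^ j ≤ (GenContFract.of v).dens (2 * j) := by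
  induction j with
  | zero => simp [zeroth_den_eq_one]
  | succ j ih =>
    have h := two_mul_dens_le hirr (2 * j)
    have : 2 * (j + 1) = 2 * j + 2 := by ring
    rw [this, pow_succ]
    nlinarith

theorem err_eq (hirr : Irrational v) (n : ℕ) :
    err v n = (GenContFract.of v).dens n * (v - (GenContFract.of v).convs n) := by
  have h0 : (GenContFract.of v).dens n ≠ 0 := (dens_pos hirr n).ne'
  rw [err, conv_eq_num_div_den]
  field_simp

theorem abs_err_le (hirr : Irrational v) (n : ℕ) :
    |err v n| ≤ 1 / (GenContFract.of v).dens (n + 1) := by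
  have h := abs_sub_convs_le (v := v) (n := n) (not_terminatedAt hirr n)
  have h0 : (0:ℝ) < (GenContFract.of v).dens n := dens_pos hirr n
  have h1 : (0:ℝ) < (GenContFract.of v).dens (n+1) := dens_pos hirr (n+1)
  rw [err_eq hirr, abs_mul, abs_of_pos h0]
  calc (GenContFract.of v).dens n * |v - (GenContFract.of v).convs n|
      ≤ (GenContFract.of v).dens n *
        (1 / ((GenContFract.of v).dens n * (GenContFract.of v).dens (n+1))) := by
        exact mul_le_mul_of_nonneg_left h h0.le
    _ = 1 / (GenContFract.of v).dens (n+1) := by field_simp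

theorem abs_err_le_one (hirr : Irrational v) (n : ℕ) : |err v n| ≤ 1 :=
  (abs_err_le hirr n).trans (by
    have := one_le_dens hirr (n+1)
    rw [div_le_one (by linarith)]; linarith)

theorem err_ne_zero (hirr : Irrational v)
    (P Q : ℕ → ℤ) (hP : ∀ n, ((P n : ℤ) : ℝ) = (GenContFract.of v).nums n)
    (hQ : ∀ n, ((Q n : ℤ) : ℝ) = (GenContFract.of v).dens n) (n : ℕ) : err v n ≠ 0 := by
  intro h
  have h0 : ((Q n : ℤ) : ℝ) ≠ 0 := by rw [hQ]; exact (dens_pos hirr n).ne'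
  apply hirr
  refine ⟨(P n : ℚ) / (Q n : ℚ), ?_⟩
  have : v * ((Q n : ℤ) : ℝ) = ((P n : ℤ) : ℝ) := by
    rw [hP, hQ]; rw [err] at h; linarith
  push_cast
  field_simp
  field_simp at this
  linarith [this]

theorem det_err (hirr : Irrational v) (n : ℕ) :
    (GenContFract.of v).dens n * err v (n + 1) -
      (GenContFract.of v).dens (n + 1) * err v n = (-1) ^ (n + 1) := by
  have hd := SimpContFract.determinant (s := SimpContFract.of v) (n := n)
    (not_terminatedAt hirr n)
  simp only [err]
  have hd' : (GenContFract.of v).nums n * (GenContFract.of v).dens (n+1) -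
      (GenContFract.of v).dens n * (GenContFract.of v).nums (n+1) = (-1)^(n+1) := hd
  linear_combination hd'

theorem abs_err_lower (hirr : Irrational v) (n : ℕ) :
    1 ≤ 2 * (GenContFract.of v).dens (n + 1) * |err v n| := by
  set x := (GenContFract.of v).dens n * err v (n + 1) with hx
  set y := (GenContFract.of v).dens (n + 1) * err v n with hy
  have h1 : |x - y| = 1 := by rw [det_err hirr n]; exact abs_neg_one_pow _
  have hxb : |x| ≤ 1 / 2 := by
    rw [hx, abs_mul, abs_of_pos (dens_pos hirr n)]
    have h2 := abs_err_le hirr (n + 1)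
    have h3 := two_mul_dens_le hirr n
    have h4 := dens_pos hirr (n + 2)
    have h5 := dens_pos hirr n
    calc (GenContFract.of v).dens n * |err v (n+1)|
        ≤ (GenContFract.of v).dens n * (1 / (GenContFract.of v).dens (n+2)) :=
          mul_le_mul_of_nonneg_left h2 h5.le
      _ ≤ 1/2 := by rw [mul_one_div, div_le_div_iff₀ h4 (by norm_num)]; linarith
  have hyb : |y| = (GenContFract.of v).dens (n+1) * |err v n| := by
    rw [hy, abs_mul, abs_of_pos (dens_pos hirr (n+1))]
  have : 1 ≤ |x| + |y| := by
    calc (1:ℝ) = |x - y| := h1.symm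
      _ ≤ |x| + |y| := abs_sub _ _
  rw [hyb] at this
  linarith

theorem err_sign (hirr : Irrational v)
    (P Q : ℕ → ℤ) (hP : ∀ n, ((P n : ℤ) : ℝ) = (GenContFract.of v).nums n)
    (hQ : ∀ n, ((Q n : ℤ) : ℝ) = (GenContFract.of v).dens n) (n : ℕ) :
    err v n * err v (n + 1) < 0 := by
  set x := (GenContFract.of v).dens n * err v (n + 1) with hx
  set y := (GenContFract.of v).dens (n + 1) * err v n with hy
  have h1 : |x - y| = 1 := by rw [det_err hirr n]; exact abs_neg_one_pow _
  have hd0 := dens_pos hirr n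
  have hd1 := dens_pos hirr (n+1)
  have hd2 := dens_pos hirr (n+2)
  have he0 := err_ne_zero hirr P Q hP hQ n
  have he1 := err_ne_zero hirr P Q hP hQ (n+1)
  have hxb : |x| < 1 := by
    rw [hx, abs_mul, abs_of_pos hd0]
    have h2 := abs_err_le hirr (n + 1)
    have h3 := two_mul_dens_le hirr n
    calc (GenContFract.of v).dens n * |err v (n+1)|
        ≤ (GenContFract.of v).dens n * (1 / (GenContFract.of v).dens (n+2)) :=
          mul_le_mul_of_nonneg_left h2 hd0.le
      _ < 1 := by rw [mul_one_div, div_lt_one hd2]; linarith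
  have hyb : |y| ≤ 1 := by
    rw [hy, abs_mul, abs_of_pos hd1]
    have h2 := abs_err_le hirr n
    calc (GenContFract.of v).dens (n+1) * |err v n|
        ≤ (GenContFract.of v).dens (n+1) * (1 / (GenContFract.of v).dens (n+1)) :=
          mul_le_mul_of_nonneg_left h2 hd1.le
      _ = 1 := by field_simp
  by_contra hcon
  push_neg at hcon
  have hxy : 0 < x * y := by
    have hprod : 0 ≤ err v n * err v (n+1) := hcon
    have : x * y = ((GenContFract.of v).dens n * (GenContFract.of v).dens (n+1)) *
        (err v n * err v (n+1)) := by rw [hx, hy]; ring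
    rcases hprod.lt_or_eq with h | h
    · rw [this]; positivity
    · exfalso
      rcases mul_eq_zero.1 h.symm with h' | h'
      · exact he0 h'
      · exact he1 h'
  have hsq : (x - y)^2 = 1 := by
    have := sq_abs (x - y); rw [h1] at this; linarith [this]
  have hx2 : x^2 < 1 := by nlinarith [sq_abs x, abs_nonneg x]
  have hy2 : y^2 ≤ 1 := by nlinarith [sq_abs y, abs_nonneg y]
  have key : 0 ≤ (1 - x^2) * (1 - y^2) := mul_nonneg (by linarith) (by linarith)
  nlinarith [sq_nonneg (x*y), mul_pos hxy hxy]

theorem abs_le_abs_add_right {u w : ℝ} (h : 0 ≤ u * w) : |u| ≤ |u + w| := by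
  rcases abs_cases u with ⟨h1, h2⟩ | ⟨h1, h2⟩ <;>
    rcases abs_cases (u + w) with ⟨h3, h4⟩ | ⟨h3, h4⟩ <;> nlinarith


theorem best_approx (hirr : Irrational v)
    (P Q : ℕ → ℤ) (hP : ∀ n, ((P n : ℤ) : ℝ) = (GenContFract.of v).nums n)
    (hQ : ∀ n, ((Q n : ℤ) : ℝ) = (GenContFract.of v).dens n) (m : ℕ) (a b : ℤ)
    (hb0 : 0 < b) (hb : (b : ℝ) < (GenContFract.of v).dens (m + 1)) :
    |err v m| ≤ |v * b - a| := by
  have hQ1 : ∀ k, 1 ≤ Q k := by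
    intro k
    have := one_le_dens hirr k
    rw [← hQ k] at this
    exact_mod_cast this
  have hbZ : b < Q (m + 1) := by
    rw [← hQ (m+1)] at hb
    exact_mod_cast hb
  -- determinant over ℤ
  set ε : ℤ := (-1) ^ (m + 1) with hεdef
  have hdZ : P m * Q (m + 1) - Q m * P (m + 1) = ε := by
    have hd : (GenContFract.of v).nums m * (GenContFract.of v).dens (m+1) -
        (GenContFract.of v).dens m * (GenContFract.of v).nums (m+1) = (-1)^(m+1) :=
      SimpContFract.determinant (s := SimpContFract.of v) (not_terminatedAt hirr m)
    have : ((P m * Q (m + 1) - Q m * P (m + 1) : ℤ) : ℝ) = ((ε : ℤ) : ℝ) := by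
      push_cast [hεdef]
      rw [hP, hQ, hP, hQ]
      push_cast at hd ⊢
      linarith [hd]
    exact_mod_cast this
  have hε2 : ε * ε = 1 := by
    rw [hεdef, ← pow_add]
    exact Even.neg_one_pow ⟨m + 1, by ring⟩
  set X : ℤ := ε * (Q (m + 1) * a - P (m + 1) * b) with hXdef
  set Y : ℤ := ε * (P m * b - Q m * a) with hYdef
  have haZ : X * P m + Y * P (m + 1) = a := by
    rw [hXdef, hYdef]
    linear_combination (ε * a) * hdZ + a * hε2
  have hbZ' : X * Q m + Y * Q (m + 1) = b := by
    rw [hXdef, hYdef]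
    linear_combination (ε * b) * hdZ + b * hε2
  have e1 : err v m = v * ((Q m : ℤ) : ℝ) - ((P m : ℤ) : ℝ) := by rw [err, hP, hQ]
  have e2 : err v (m+1) = v * ((Q (m+1) : ℤ) : ℝ) - ((P (m+1) : ℤ) : ℝ) := by
    rw [err, hP, hQ]
  have haR : (X : ℝ) * (P m : ℝ) + (Y : ℝ) * (P (m+1) : ℝ) = (a : ℝ) := by
    exact_mod_cast haZ
  have hbR : (X : ℝ) * (Q m : ℝ) + (Y : ℝ) * (Q (m+1) : ℝ) = (b : ℝ) := by
    exact_mod_cast hbZ'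
  have hvba : v * (b : ℝ) - (a : ℝ) = (X : ℝ) * err v m + (Y : ℝ) * err v (m+1) := by
    rw [e1, e2]
    linear_combination haR - v * hbR
  rw [hvba]
  rcases eq_or_ne Y 0 with hY | hY
  · -- b = X * Q m, so X ≥ 1
    rw [hY] at hbZ'
    simp at hbZ'
    have hX1 : 1 ≤ X := by nlinarith [hQ1 m]
    have hXR : (1 : ℝ) ≤ |(X : ℝ)| := by
      rw [abs_of_pos (by exact_mod_cast hX1 : (0:ℝ) < (X:ℝ))]
      exact_mod_cast hX1
    rw [hY]
    simp only [Int.cast_zero, zero_mul, add_zero, abs_mul]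
    nlinarith [abs_nonneg (err v m)]
  · rcases eq_or_ne X 0 with hX | hX
    · exfalso
      rw [hX] at hbZ'
      simp at hbZ'
      -- b = Y * Q(m+1), 0 < b < Q(m+1)
      have hQp := hQ1 (m+1)
      rcases lt_trichotomy Y 0 with h | h | h
      · nlinarith
      · exact hY h
      · nlinarith
    · -- X, Y both nonzero: opposite signs
      have hXY : X * Y < 0 := by
        by_contra hcon
        push_neg at hcon
        have h1 := hQ1 m
        have h2 := hQ1 (m+1)
        rcases lt_trichotomy X 0 with hX' | hX' | hX'
        · have hY' : Y ≤ 0 := by nlinarith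
          have hY'' : Y < 0 := lt_of_le_of_ne hY' hY
          nlinarith
        · exact hX hX'
        · have hY' : 0 ≤ Y := by nlinarith
          have hY'' : 0 < Y := lt_of_le_of_ne hY' (Ne.symm hY)
          nlinarith
      have hprod : 0 ≤ ((X : ℝ) * err v m) * ((Y : ℝ) * err v (m+1)) := by
        have h1 : ((X : ℝ) * err v m) * ((Y : ℝ) * err v (m+1)) =
            ((X * Y : ℤ) : ℝ) * (err v m * err v (m+1)) := by push_cast; ring
        rw [h1]
        have h2 : ((X * Y : ℤ) : ℝ) < 0 := by exact_mod_cast hXY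
        have h3 := err_sign hirr P Q hP hQ m
        nlinarith
      have hXR : (1 : ℝ) ≤ |(X : ℝ)| := by
        have : 1 ≤ |X| := Int.one_le_abs hX
        calc (1:ℝ) ≤ ((|X| : ℤ) : ℝ) := by exact_mod_cast this
          _ = |(X : ℝ)| := by push_cast; rfl
      calc |err v m| ≤ |(X:ℝ)| * |err v m| := by nlinarith [abs_nonneg (err v m)]
        _ = |(X:ℝ) * err v m| := (abs_mul _ _).symm
        _ ≤ |(X:ℝ) * err v m + (Y:ℝ) * err v (m+1)| := abs_le_abs_add_right hprod



variable {v : ℝ}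

theorem alphaSet_nonempty (ω : ℝ × ℝ) (n : ℕ) :
    {x : ℝ | ∃ ν : ℤ × ℤ, ν ≠ 0 ∧ |ν.1| + |ν.2| ≤ 2 ^ n ∧
      x = |ω.1 * (ν.1 : ℝ) + ω.2 * (ν.2 : ℝ)|}.Nonempty := by
  refine ⟨|ω.1|, ⟨(1, 0), ?_, ?_, by norm_num⟩⟩
  · simp [Prod.ext_iff]
  · simpa using one_le_pow₀ (by norm_num : (1:ℤ) ≤ 2)

theorem alphaSet_bddBelow (ω : ℝ × ℝ) (n : ℕ) :
    BddBelow {x : ℝ | ∃ ν : ℤ × ℤ, ν ≠ 0 ∧ |ν.1| + |ν.2| ≤ 2 ^ n ∧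
      x = |ω.1 * (ν.1 : ℝ) + ω.2 * (ν.2 : ℝ)|} := by
  refine ⟨0, fun x hx => ?_⟩
  obtain ⟨ν, -, -, rfl⟩ := hx
  exact abs_nonneg _

theorem alphan2_nonneg (ω : ℝ × ℝ) (n : ℕ) : 0 ≤ alphan2 ω n :=
  le_csInf (alphaSet_nonempty ω n) (fun x hx => by
    obtain ⟨ν, -, -, rfl⟩ := hx; exact abs_nonneg _)

theorem alphan2_le_abs {ω₁ ω₂ : ℝ} (n : ℕ) (ν : ℤ × ℤ) (hν : ν ≠ 0)
    (hle : |ν.1| + |ν.2| ≤ 2 ^ n) :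
    alphan2 (ω₁, ω₂) n ≤ |ω₁ * (ν.1 : ℝ) + ω₂ * (ν.2 : ℝ)| :=
  csInf_le (alphaSet_bddBelow _ n) ⟨ν, hν, hle, rfl⟩

theorem alphan2_le_fst {ω₁ ω₂ : ℝ} (n : ℕ) (hω : 0 < ω₁) : alphan2 (ω₁, ω₂) n ≤ ω₁ := by
  have h := alphan2_le_abs (ω₁ := ω₁) (ω₂ := ω₂) n (1, 0) (by simp [Prod.ext_iff])
    (by simpa using one_le_pow₀ (by norm_num : (1:ℤ) ≤ 2))
  simpa [abs_of_pos hω] using h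

theorem P_bounds (hirr : Irrational v) (hv0 : 0 < v) (hv1 : v < 1)
    (P Q : ℕ → ℤ) (hP : ∀ n, ((P n : ℤ) : ℝ) = (GenContFract.of v).nums n)
    (hQ : ∀ n, ((Q n : ℤ) : ℝ) = (GenContFract.of v).dens n) (n : ℕ) :
    0 ≤ P n ∧ P n ≤ Q n := by
  have he : |err v n| ≤ 1 := abs_err_le_one hirr n
  have h1 : v * ((Q n : ℤ) : ℝ) - ((P n : ℤ) : ℝ) = err v n := by rw [err, hP, hQ]
  have hq1 : (1 : ℝ) ≤ ((Q n : ℤ) : ℝ) := by rw [hQ]; exact one_le_dens hirr n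
  have habs := abs_le.1 he
  constructor
  · have : (-1 : ℝ) < (P n : ℝ) := by nlinarith [habs.1, habs.2]
    have h2 : (-1 : ℤ) < P n := by exact_mod_cast this
    omega
  · have : ((P n : ℤ) : ℝ) < ((Q n : ℤ) : ℝ) + 1 := by nlinarith [habs.1, habs.2]
    have h2 : P n < Q n + 1 := by exact_mod_cast this
    omega

theorem alphan2_lower (hirr : Irrational v) (hv0 : 0 < v) (hv1 : v < 1)
    (P Q : ℕ → ℤ) (hP : ∀ n, ((P n : ℤ) : ℝ) = (GenContFract.of v).nums n)
    (hQ : ∀ n, ((Q n : ℤ) : ℝ) = (GenContFract.of v).dens n)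
    {ω₁ : ℝ} (hω : 0 < ω₁) (n m : ℕ)
    (hm : (2 : ℝ) ^ n < (GenContFract.of v).dens (m + 1)) :
    ω₁ * |err v m| ≤ alphan2 (ω₁, ω₁ * v) n := by
  refine le_csInf (alphaSet_nonempty _ n) ?_
  rintro x ⟨ν, hν0, hνle, rfl⟩
  have hfac : ω₁ * (ν.1 : ℝ) + (ω₁ * v) * (ν.2 : ℝ) = ω₁ * ((ν.1 : ℝ) + v * (ν.2 : ℝ)) := by
    ring
  rw [hfac, abs_mul, abs_of_pos hω]
  have he1 : |err v m| ≤ 1 := abs_err_le_one hirr m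
  rcases eq_or_ne ν.2 0 with h2 | h2
  · have h1 : ν.1 ≠ 0 := by
      intro h1; exact hν0 (Prod.ext h1 h2)
    have : (1 : ℝ) ≤ |(ν.1 : ℝ)| := by
      have := Int.one_le_abs h1
      calc (1:ℝ) ≤ ((|ν.1| : ℤ) : ℝ) := by exact_mod_cast this
        _ = |(ν.1 : ℝ)| := by push_cast; rfl
    rw [h2]
    simp only [Int.cast_zero, mul_zero, add_zero]
    nlinarith [abs_nonneg (err v m)]
  · -- reduce to best approximation
    set b : ℤ := if 0 < ν.2 then ν.2 else -ν.2 with hbdef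
    set a : ℤ := if 0 < ν.2 then -ν.1 else ν.1 with hadef
    have hb0 : 0 < b := by
      rw [hbdef]; split
      · assumption
      · rename_i h; omega
    have habs2 : (b : ℝ) ≤ (2 : ℝ) ^ n := by
      have hb_eq : b = |ν.2| := by
        rw [hbdef]; split
        · exact (abs_of_pos (by assumption)).symm
        · exact (abs_of_nonpos (by omega)).symm
      have h3 : b ≤ |ν.1| + |ν.2| := by
        rw [hb_eq]; have := abs_nonneg ν.1; omega
      have h4 : (b : ℝ) ≤ ((2 ^ n : ℤ) : ℝ) := by exact_mod_cast le_trans h3 hνle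
      simpa using h4
    have hbest := best_approx hirr P Q hP hQ m a b hb0 (lt_of_le_of_lt habs2 hm)
    have heq : |(ν.1 : ℝ) + v * (ν.2 : ℝ)| = |v * (b : ℝ) - (a : ℝ)| := by
      rw [hbdef, hadef]
      split
      · push_cast; rw [show v * (ν.2:ℝ) - -(ν.1:ℝ) = (ν.1:ℝ) + v * (ν.2:ℝ) by ring]
      · push_cast
        rw [show v * -(ν.2:ℝ) - (ν.1:ℝ) = -((ν.1:ℝ) + v * (ν.2:ℝ)) by ring, abs_neg]
    rw [heq]
    exact mul_le_mul_of_nonneg_left hbest hω.le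

theorem alphan2_upper (hirr : Irrational v) (hv0 : 0 < v) (hv1 : v < 1)
    (P Q : ℕ → ℤ) (hP : ∀ n, ((P n : ℤ) : ℝ) = (GenContFract.of v).nums n)
    (hQ : ∀ n, ((Q n : ℤ) : ℝ) = (GenContFract.of v).dens n)
    {ω₁ : ℝ} (hω : 0 < ω₁) (n k : ℕ) (h2 : 2 * Q k ≤ 2 ^ n) :
    alphan2 (ω₁, ω₁ * v) n ≤ ω₁ * |err v k| := by
  obtain ⟨hP0, hPQ⟩ := P_bounds hirr hv0 hv1 P Q hP hQ k
  have hQ1 : 1 ≤ Q k := by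
    have := one_le_dens hirr k
    rw [← hQ k] at this
    exact_mod_cast this
  have key := alphan2_le_abs (ω₁ := ω₁) (ω₂ := ω₁ * v) n (-(P k), Q k)
    (by simp [Prod.ext_iff]; omega)
    (by simp only []; rw [abs_neg, abs_of_nonneg hP0, abs_of_nonneg (by omega : (0:ℤ) ≤ Q k)]
        omega)
  have heq : |ω₁ * (((-(P k) : ℤ)) : ℝ) + (ω₁ * v) * ((Q k : ℤ) : ℝ)| = ω₁ * |err v k| := by
    have : ω₁ * (((-(P k) : ℤ)) : ℝ) + (ω₁ * v) * ((Q k : ℤ) : ℝ)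
        = ω₁ * (v * ((Q k : ℤ) : ℝ) - ((P k : ℤ) : ℝ)) := by push_cast; ring
    rw [this, abs_mul, abs_of_pos hω, err, hP, hQ]
  rw [heq] at key
  exact key





theorem range_geom_le (K : ℕ) : ∑ i ∈ Finset.range K, (1/2 : ℝ)^i ≤ 2 := by
  rw [geom_sum_eq (by norm_num : (1/2:ℝ) ≠ 1)]
  have h : (0:ℝ) < (1/2)^K := by positivity
  rw [div_le_iff_of_neg (by norm_num : (1/2:ℝ) - 1 < 0)]
  nlinarith

theorem sum_pow_half_le (s : Finset ℕ) (n₀ : ℕ) (h : ∀ n ∈ s, n₀ ≤ n) :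
    ∑ n ∈ s, (1/2 : ℝ)^n ≤ 2 * (1/2)^n₀ := by
  classical
  set N := s.sup id + 1 with hN
  have hsub : s ⊆ Finset.Ico n₀ N := fun n hn =>
    Finset.mem_Ico.2 ⟨h n hn, Nat.lt_succ_of_le (Finset.le_sup (f := id) hn)⟩
  calc ∑ n ∈ s, (1/2 : ℝ)^n ≤ ∑ n ∈ Finset.Ico n₀ N, (1/2:ℝ)^n :=
        Finset.sum_le_sum_of_subset_of_nonneg hsub (fun i _ _ => by positivity)
    _ = ∑ i ∈ Finset.range (N - n₀), (1/2:ℝ)^(n₀ + i) := Finset.sum_Ico_eq_sum_range _ _ _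
    _ = (1/2)^n₀ * ∑ i ∈ Finset.range (N - n₀), (1/2:ℝ)^i := by
        rw [Finset.mul_sum]; exact Finset.sum_congr rfl fun i _ => by rw [pow_add]
    _ ≤ (1/2)^n₀ * 2 := mul_le_mul_of_nonneg_left (range_geom_le _) (by positivity)
    _ = 2 * (1/2)^n₀ := by ring

theorem sum_comp_le (u : ℕ → ℝ) (hu0 : ∀ n, 0 ≤ u n) (hu : Summable u) (φ : ℕ → ℕ)
    (hmono : Monotone φ) (hstep : ∀ k, φ k < φ (k + 2)) (K : ℕ) :
    ∑ k ∈ Finset.range K, u (φ k) ≤ 2 * ∑' n, u n := by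
  classical
  have hfib := Finset.sum_fiberwise_of_maps_to (g := φ) (t := (Finset.range K).image φ)
    (fun x hx => Finset.mem_image_of_mem φ hx) (fun k => u (φ k))
  rw [← hfib]
  have hinner : ∀ j ∈ (Finset.range K).image φ,
      (∑ k ∈ (Finset.range K).filter (fun k => φ k = j), u (φ k)) ≤ 2 * u j := by
    intro j hj
    set F := (Finset.range K).filter (fun k => φ k = j) with hF
    have hne : F.Nonempty := by
      obtain ⟨k, hk, hkj⟩ := Finset.mem_image.1 hj
      exact ⟨k, Finset.mem_filter.2 ⟨hk, hkj⟩⟩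
    set m := F.min' hne with hm
    have hmF : m ∈ F := F.min'_mem hne
    have hmj : φ m = j := (Finset.mem_filter.1 hmF).2
    have hsub : F ⊆ Finset.Icc m (m + 1) := by
      intro k hk
      have hk1 : m ≤ k := F.min'_le k hk
      have hk2 : k ≤ m + 1 := by
        by_contra hcon
        push_neg at hcon
        have h1 : φ (m + 2) ≤ φ k := hmono (by omega)
        have h2 := hstep m
        have h3 : φ k = j := (Finset.mem_filter.1 hk).2
        omega
      exact Finset.mem_Icc.2 ⟨hk1, hk2⟩
    calc (∑ k ∈ F, u (φ k)) = ∑ k ∈ F, u j :=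
          Finset.sum_congr rfl fun k hk => by rw [(Finset.mem_filter.1 hk).2]
      _ = (F.card : ℝ) * u j := by rw [Finset.sum_const, nsmul_eq_mul]
      _ ≤ 2 * u j := by
          have hcard : F.card ≤ 2 := le_trans (Finset.card_le_card hsub) (by
            rw [Nat.card_Icc]; omega)
          have := hu0 j
          have hc : (F.card : ℝ) ≤ 2 := by exact_mod_cast hcard
          nlinarith
  calc (∑ j ∈ (Finset.range K).image φ, ∑ k ∈ (Finset.range K).filter (fun k => φ k = j), u (φ k))
      ≤ ∑ j ∈ (Finset.range K).image φ, 2 * u j := Finset.sum_le_sum hinner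
    _ = 2 * ∑ j ∈ (Finset.range K).image φ, u j := by rw [Finset.mul_sum]
    _ ≤ 2 * ∑' n, u n := by
        have := Summable.sum_le_tsum ((Finset.range K).image φ) (fun i _ => hu0 i) hu
        linarith





theorem sum_weighted_le (L : ℕ → ℝ) (hL0 : ∀ j, 0 ≤ L j) (M n₀ : ℕ → ℕ)
    (hn : ∀ n, n₀ (M n) ≤ n) (D : ℕ → ℝ) (hD0 : ∀ j, 0 ≤ D j)
    (hDle : ∀ j, 2 * (1/2:ℝ)^(n₀ j) * L j ≤ 2 * D j) (hD : Summable D) (N : ℕ) :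
    ∑ n ∈ Finset.range N, (1/2:ℝ)^n * L (M n) ≤ 2 * ∑' j, D j := by
  classical
  have hfib := Finset.sum_fiberwise_of_maps_to (g := M) (t := (Finset.range N).image M)
    (fun x hx => Finset.mem_image_of_mem M hx) (fun n => (1/2:ℝ)^n * L (M n))
  rw [← hfib]
  have hinner : ∀ j ∈ (Finset.range N).image M,
      (∑ n ∈ (Finset.range N).filter (fun n => M n = j), (1/2:ℝ)^n * L (M n)) ≤ 2 * D j := by
    intro j hj
    have heq : (∑ n ∈ (Finset.range N).filter (fun n => M n = j), (1/2:ℝ)^n * L (M n))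
        = (∑ n ∈ (Finset.range N).filter (fun n => M n = j), (1/2:ℝ)^n) * L j := by
      rw [Finset.sum_mul]
      exact Finset.sum_congr rfl fun n hn' => by rw [(Finset.mem_filter.1 hn').2]
    rw [heq]
    have hbound := sum_pow_half_le ((Finset.range N).filter (fun n => M n = j)) (n₀ j)
      (fun n hn' => by
        have h1 := (Finset.mem_filter.1 hn').2
        exact h1 ▸ hn n)
    calc (∑ n ∈ (Finset.range N).filter (fun n => M n = j), (1/2:ℝ)^n) * L j
        ≤ (2 * (1/2:ℝ)^(n₀ j)) * L j := mul_le_mul_of_nonneg_right hbound (hL0 j)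
      _ = 2 * (1/2:ℝ)^(n₀ j) * L j := by ring
      _ ≤ 2 * D j := hDle j
  calc (∑ j ∈ (Finset.range N).image M,
        ∑ n ∈ (Finset.range N).filter (fun n => M n = j), (1/2:ℝ)^n * L (M n))
      ≤ ∑ j ∈ (Finset.range N).image M, 2 * D j := Finset.sum_le_sum hinner
    _ = 2 * ∑ j ∈ (Finset.range N).image M, D j := by rw [Finset.mul_sum]
    _ ≤ 2 * ∑' j, D j := by
        have := Summable.sum_le_tsum ((Finset.range N).image M) (fun i _ => hD0 i) hD
        linarith



end BryunoAux

/-- Two-dimensional Bryuno comparison: for `ω = (ω₁, ω₂)` with `0 < ω₂ < ω₁`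
and `α = ω₂/ω₁` irrational, `ω` is a Bryuno vector, i.e.
`B(ω) = Σ_n 2^{-n} log(1/α_n(ω)) < ∞`, if and only if
`D(ω) = Σ_n (log q_{n+1})/q_n < ∞`, where `(q_n)` are the denominators of the
continued fraction convergents of `α`. -/
theorem bryuno_iff_classical_bryuno (ω₁ ω₂ : ℝ) (h2 : 0 < ω₂) (h12 : ω₂ < ω₁)
    (hα : Irrational (ω₂ / ω₁)) :
    Summable (fun n : ℕ => (1 / 2 : ℝ) ^ n * Real.log (1 / alphan2 (ω₁, ω₂) n)) ↔
    Summable (fun n : ℕ =>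
      Real.log ((GenContFract.of (ω₂ / ω₁)).dens (n + 1)) /
        (GenContFract.of (ω₂ / ω₁)).dens n) := by
  open BryunoAux in
  have hω : 0 < ω₁ := h2.trans h12
  set v : ℝ := ω₂ / ω₁ with hvdef
  have hv0 : 0 < v := div_pos h2 hω
  have hv1 : v < 1 := (div_lt_one hω).2 h12
  have hω₂ : ω₂ = ω₁ * v := by rw [hvdef]; field_simp
  -- integer numerators and denominators
  have hPex : ∀ n, ∃ z : ℤ, (GenContFract.of v).nums n = (z : ℝ) :=
    fun n => (BryunoAux.exists_int_num_den hα n).1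
  have hQex : ∀ n, ∃ z : ℤ, (GenContFract.of v).dens n = (z : ℝ) :=
    fun n => (BryunoAux.exists_int_num_den hα n).2
  choose P hP using hPex
  choose Q hQ using hQex
  have hP' : ∀ n, ((P n : ℤ) : ℝ) = (GenContFract.of v).nums n := fun n => (hP n).symm
  have hQ' : ∀ n, ((Q n : ℤ) : ℝ) = (GenContFract.of v).dens n := fun n => (hQ n).symm
  -- facts about the integer denominators
  have hdq1 : ∀ k, (1 : ℝ) ≤ (GenContFract.of v).dens k := BryunoAux.one_le_dens hα
  have hdqpos : ∀ k, (0 : ℝ) < (GenContFract.of v).dens k := BryunoAux.dens_pos hα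
  have hdqmono : ∀ {a b : ℕ}, a ≤ b →
      (GenContFract.of v).dens a ≤ (GenContFract.of v).dens b :=
    fun hab => BryunoAux.dens_mono hα hab
  have hQ1 : ∀ k, 1 ≤ Q k := by
    intro k
    have := hdq1 k
    rw [← hQ' k] at this
    exact_mod_cast this
  have hQmono : Monotone Q := by
    intro a b hab
    have := hdqmono hab
    rw [← hQ' a, ← hQ' b] at this
    exact_mod_cast this
  have hQgrow : ∀ k, 2 * Q k ≤ Q (k + 2) := by
    intro k
    have := BryunoAux.two_mul_dens_le hα k
    rw [← hQ' k, ← hQ' (k + 2)] at this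
    exact_mod_cast this
  have hQpow : ∀ j, (2 : ℤ) ^ j ≤ Q (2 * j) := by
    intro j
    have := BryunoAux.pow_le_dens hα j
    rw [← hQ' (2 * j)] at this
    exact_mod_cast this
  have hQ0 : Q 0 = 1 := by
    have h := hQ' 0
    rw [GenContFract.zeroth_den_eq_one] at h
    exact_mod_cast h
  have hpowmono : ∀ {a b : ℕ}, a ≤ b → (2 : ℤ) ^ a ≤ 2 ^ b :=
    fun hab => pow_le_pow_right₀ one_le_two hab
  have hpowpos : ∀ a : ℕ, (0 : ℤ) < 2 ^ a := fun a => pow_pos (by norm_num) a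
  -- the cutoff function M
  set M : ℕ → ℕ := fun n => Nat.findGreatest (fun m => Q m ≤ 2 ^ n) (2 * n + 2) with hMdef
  have hM1 : ∀ n, Q (M n) ≤ 2 ^ n := by
    intro n
    exact Nat.findGreatest_spec (P := fun m => Q m ≤ 2 ^ n) (Nat.zero_le _)
      (by show Q 0 ≤ 2 ^ n; rw [hQ0]; exact one_le_pow₀ one_le_two)
  have hM2 : ∀ n, (2 : ℤ) ^ n < Q (M n + 1) := by
    intro n
    by_contra hcon
    push_neg at hcon
    rcases le_or_gt (M n + 1) (2 * n + 2) with hle | hlt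
    · exact (Nat.findGreatest_is_greatest (Nat.lt_succ_self (M n)) hle) hcon
    · have hMle : M n ≤ 2 * n + 2 := Nat.findGreatest_le _
      have hMe : M n = 2 * n + 2 := by omega
      have h1 := hM1 n
      rw [hMe] at h1
      have h22 : 2 * (n + 1) = 2 * n + 2 := by ring
      have h3 : (2 : ℤ) ^ (n + 1) ≤ Q (2 * n + 2) := by rw [← h22]; exact hQpow (n + 1)
      have h4 : (2 : ℤ) ^ n < 2 ^ (n + 1) := by
        rw [pow_succ]; nlinarith [hpowpos n]
      linarith
  have hMge : ∀ k n, Q k ≤ 2 ^ n → k ≤ M n := by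
    intro k n hk
    apply Nat.le_findGreatest _ hk
    by_contra hcon
    push_neg at hcon
    have h1 : 2 * (n + 1) ≤ k := by omega
    have h2 : Q (2 * (n + 1)) ≤ Q k := hQmono h1
    have h3 := hQpow (n + 1)
    have h4 : (2 : ℤ) ^ n < 2 ^ (n + 1) := by rw [pow_succ]; nlinarith [hpowpos n]
    linarith
  -- the first time `2^n` exceeds `Q k`
  have hex : ∀ k, ∃ n : ℕ, Q k ≤ 2 ^ n := by
    intro k
    refine ⟨(Q k).toNat, ?_⟩
    have h1 : (Q k).toNat < 2 ^ ((Q k).toNat) := Nat.lt_two_pow_self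
    have h2 : Q k = ((Q k).toNat : ℤ) := (Int.toNat_of_nonneg (by linarith [hQ1 k])).symm
    rw [h2]
    exact_mod_cast h1.le
  set n₀ : ℕ → ℕ := fun k => Nat.find (hex k) with hn₀def
  have hn₀spec : ∀ k, Q k ≤ 2 ^ (n₀ k) := fun k => Nat.find_spec (hex k)
  have hn₀le : ∀ k n, Q k ≤ 2 ^ n → n₀ k ≤ n := fun k n h => Nat.find_le h
  have hn₀pow : ∀ k, (2 : ℤ) ^ (n₀ k) ≤ 2 * Q k := by
    intro k
    rcases Nat.eq_zero_or_pos (n₀ k) with h | h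
    · rw [h]
      simp only [pow_zero]
      linarith [hQ1 k]
    · obtain ⟨j, hj⟩ := Nat.exists_eq_succ_of_ne_zero h.ne'
      have hjlt : j < n₀ k := by omega
      have hmin : ¬Q k ≤ 2 ^ j := Nat.find_min (hex k) (by simpa only [hn₀def] using hjlt)
      push_neg at hmin
      rw [hj, pow_succ]
      linarith
  have hn₀mono : Monotone n₀ := fun a b hab => hn₀le a _ (le_trans (hQmono hab) (hn₀spec b))
  have hn₀step : ∀ k, n₀ k < n₀ (k + 2) := by
    intro k
    by_contra hcon
    push_neg at hcon
    have h1 : Q (k + 2) ≤ 2 ^ (n₀ (k + 2)) := hn₀spec _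
    have h2 : (2 : ℤ) ^ (n₀ (k + 2)) ≤ 2 ^ (n₀ k) := hpowmono hcon
    have h3 : (2 : ℤ) ^ (n₀ k) < Q (k + 2) := by
      rcases Nat.eq_zero_or_pos (n₀ k) with h | h
      · rw [h]
        simp only [pow_zero]
        have := hQ1 k
        have := hQgrow k
        linarith
      · obtain ⟨j, hj⟩ := Nat.exists_eq_succ_of_ne_zero h.ne'
        have hjlt : j < n₀ k := by omega
        have hmin : ¬Q k ≤ 2 ^ j := Nat.find_min (hex k) (by simpa only [hn₀def] using hjlt)
        push_neg at hmin
        have := hQgrow k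
        rw [hj, pow_succ]
        linarith
    linarith
  have hMn₀ : ∀ k, k ≤ M (n₀ k) := fun k => hMge k (n₀ k) (hn₀spec k)
  have hn₀M : ∀ n, n₀ (M n) ≤ n := fun n => hn₀le (M n) n (hM1 n)
  -- bounds for `alphan2`
  have hAeq : ∀ n, alphan2 (ω₁, ω₂) n = alphan2 (ω₁, ω₁ * v) n := fun n => by rw [← hω₂]
  have herrup : ∀ k, |BryunoAux.err v k| ≤ 1 / (GenContFract.of v).dens (k + 1) :=
    BryunoAux.abs_err_le hα
  have herrlow : ∀ k, 1 ≤ 2 * (GenContFract.of v).dens (k + 1) * |BryunoAux.err v k| :=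
    BryunoAux.abs_err_lower hα
  have herrpos : ∀ k, 0 < |BryunoAux.err v k| :=
    fun k => abs_pos.2 (BryunoAux.err_ne_zero hα P Q hP' hQ' k)
  have hAup : ∀ n, alphan2 (ω₁, ω₂) (n + 1) ≤ ω₁ * |BryunoAux.err v (M n)| := by
    intro n
    rw [hAeq]
    apply BryunoAux.alphan2_upper hα hv0 hv1 P Q hP' hQ' hω (n + 1) (M n)
    have := hM1 n
    calc 2 * Q (M n) ≤ 2 * 2 ^ n := by linarith
      _ = 2 ^ (n + 1) := by ring
  have hAlow : ∀ n, ω₁ * |BryunoAux.err v (M n)| ≤ alphan2 (ω₁, ω₂) n := by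
    intro n
    rw [hAeq]
    apply BryunoAux.alphan2_lower hα hv0 hv1 P Q hP' hQ' hω n (M n)
    have h := hM2 n
    have hcast : (((2 : ℤ) ^ n : ℤ) : ℝ) < ((Q (M n + 1) : ℤ) : ℝ) := by exact_mod_cast h
    rw [hQ' (M n + 1)] at hcast
    calc (2 : ℝ) ^ n = (((2 : ℤ) ^ n : ℤ) : ℝ) := by push_cast; ring
      _ < _ := hcast
  have hApos : ∀ n, 0 < alphan2 (ω₁, ω₂) n := by
    intro n
    have h1 : 0 < ω₁ * |BryunoAux.err v (M n)| := mul_pos hω (herrpos (M n))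
    linarith [hAlow n]
  have hAle : ∀ n, alphan2 (ω₁, ω₂) n ≤ ω₁ := fun n => by
    rw [hAeq]; exact BryunoAux.alphan2_le_fst n hω
  -- the constant
  set c : ℝ := |Real.log ω₁| + Real.log 2 with hcdef
  have hc0 : 0 ≤ c := by
    have := Real.log_nonneg (by norm_num : (1:ℝ) ≤ 2)
    have := abs_nonneg (Real.log ω₁)
    linarith
  have hlogdq : ∀ k, 0 ≤ Real.log ((GenContFract.of v).dens k) :=
    fun k => Real.log_nonneg (hdq1 k)
  -- logarithmic comparison
  have hlog_up : ∀ n, Real.log (1 / alphan2 (ω₁, ω₂) n) ≤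
      Real.log ((GenContFract.of v).dens (M n + 1)) + c := by
    intro n
    rw [one_div, Real.log_inv]
    have hd := hdqpos (M n + 1)
    have he := herrpos (M n)
    have h1 : ω₁ * (1 / (2 * (GenContFract.of v).dens (M n + 1))) ≤ alphan2 (ω₁, ω₂) n := by
      refine le_trans ?_ (hAlow n)
      have h2 := herrlow (M n)
      have h3 : 1 / (2 * (GenContFract.of v).dens (M n + 1)) ≤ |BryunoAux.err v (M n)| := by
        rw [div_le_iff₀ (by linarith)]
        linarith
      exact mul_le_mul_of_nonneg_left h3 hω.le
    have hpos : (0:ℝ) < 1 / (2 * (GenContFract.of v).dens (M n + 1)) :=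
      one_div_pos.2 (by linarith)
    have h2 : Real.log (ω₁ * (1 / (2 * (GenContFract.of v).dens (M n + 1)))) ≤
        Real.log (alphan2 (ω₁, ω₂) n) := Real.log_le_log (mul_pos hω hpos) h1
    rw [Real.log_mul hω.ne' hpos.ne', one_div, Real.log_inv,
      Real.log_mul (by norm_num : (2:ℝ) ≠ 0) hd.ne'] at h2
    have h4 := le_abs_self (Real.log ω₁)
    have h5 := neg_abs_le (Real.log ω₁)
    rw [hcdef]
    linarith
  have hlog_low : ∀ n, Real.log ((GenContFract.of v).dens (M n + 1)) ≤
      Real.log (1 / alphan2 (ω₁, ω₂) (n + 1)) + c := by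
    intro n
    rw [one_div, Real.log_inv]
    have hd := hdqpos (M n + 1)
    have hpos : (0:ℝ) < 1 / (GenContFract.of v).dens (M n + 1) := one_div_pos.2 hd
    have h1 : alphan2 (ω₁, ω₂) (n + 1) ≤ ω₁ * (1 / (GenContFract.of v).dens (M n + 1)) := by
      refine le_trans (hAup n) ?_
      exact mul_le_mul_of_nonneg_left (herrup (M n)) hω.le
    have h2 : Real.log (alphan2 (ω₁, ω₂) (n + 1)) ≤
        Real.log (ω₁ * (1 / (GenContFract.of v).dens (M n + 1))) :=
      Real.log_le_log (hApos (n + 1)) h1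
    rw [Real.log_mul hω.ne' hpos.ne', one_div, Real.log_inv] at h2
    have h4 := le_abs_self (Real.log ω₁)
    rw [hcdef]
    have := Real.log_nonneg (by norm_num : (1:ℝ) ≤ 2)
    linarith
  have hlog_bnd : ∀ n, -c ≤ Real.log (1 / alphan2 (ω₁, ω₂) n) := by
    intro n
    rw [one_div, Real.log_inv]
    have h1 : Real.log (alphan2 (ω₁, ω₂) n) ≤ Real.log ω₁ :=
      Real.log_le_log (hApos n) (hAle n)
    have h4 := le_abs_self (Real.log ω₁)
    have := Real.log_nonneg (by norm_num : (1:ℝ) ≤ 2)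
    rw [hcdef]
    linarith
  -- auxiliary sequences
  set u : ℕ → ℝ := fun n => (1 / 2 : ℝ) ^ n * Real.log ((GenContFract.of v).dens (M n + 1))
    with hudef
  have hu0 : ∀ n, 0 ≤ u n := fun n => mul_nonneg (by positivity) (hlogdq (M n + 1))
  have hD0 : ∀ n, 0 ≤ Real.log ((GenContFract.of v).dens (n + 1)) / (GenContFract.of v).dens n :=
    fun n => div_nonneg (hlogdq (n + 1)) (hdqpos n).le
  have hgeo : Summable (fun n : ℕ => c * (1 / 2 : ℝ) ^ n) :=
    (summable_geometric_of_lt_one (by norm_num) (by norm_num)).mul_left c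
  constructor
  · -- Bryuno implies classical Bryuno
    intro ht
    -- first: Summable u
    have htshift : Summable (fun n => (1 / 2 : ℝ) ^ n *
        Real.log (1 / alphan2 (ω₁, ω₂) (n + 1))) := by
      have h1 := (summable_nat_add_iff 1).2 ht
      have h2 := h1.mul_left 2
      apply h2.congr
      intro n
      show 2 * ((1 / 2 : ℝ) ^ (n + 1) * Real.log (1 / alphan2 (ω₁, ω₂) (n + 1))) = _
      rw [pow_succ]
      ring
    have hu : Summable u := by
      apply Summable.of_nonneg_of_le hu0 _ (htshift.add hgeo)
      intro n
      rw [hudef]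
      show (1 / 2 : ℝ) ^ n * Real.log ((GenContFract.of v).dens (M n + 1)) ≤
        (1 / 2 : ℝ) ^ n * Real.log (1 / alphan2 (ω₁, ω₂) (n + 1)) + c * (1 / 2) ^ n
      have h1 := hlog_low n
      have h2 : (0:ℝ) ≤ (1/2:ℝ)^n := by positivity
      nlinarith
    -- now: Summable D
    apply summable_of_sum_range_le (c := 2 * (2 * ∑' n, u n)) hD0
    intro K
    have hterm : ∀ k, Real.log ((GenContFract.of v).dens (k + 1)) / (GenContFract.of v).dens k
        ≤ 2 * u (n₀ k) := by
      intro k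
      have h1 : Real.log ((GenContFract.of v).dens (k + 1)) ≤
          Real.log ((GenContFract.of v).dens (M (n₀ k) + 1)) :=
        Real.log_le_log (hdqpos (k + 1)) (hdqmono (by have := hMn₀ k; omega))
      have h2 : 1 / (2 * (GenContFract.of v).dens k) ≤ (1 / 2 : ℝ) ^ (n₀ k) := by
        have h3 : (2 : ℝ) ^ (n₀ k) ≤ 2 * (GenContFract.of v).dens k := by
          have h4 := hn₀pow k
          have h5 : (((2 : ℤ) ^ (n₀ k) : ℤ) : ℝ) ≤ ((2 * Q k : ℤ) : ℝ) := by exact_mod_cast h4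
          rw [Int.cast_mul] at h5
          rw [hQ' k] at h5
          calc (2:ℝ)^(n₀ k) = (((2 : ℤ) ^ (n₀ k) : ℤ) : ℝ) := by push_cast; ring
            _ ≤ _ := by simpa using h5
        rw [div_pow, one_pow]
        exact one_div_le_one_div_of_le (by positivity) h3
      have h6 : Real.log ((GenContFract.of v).dens (k + 1)) / (GenContFract.of v).dens k =
          (1 / (2 * (GenContFract.of v).dens k)) *
            Real.log ((GenContFract.of v).dens (k + 1)) * 2 := by
        field_simp
      rw [h6, hudef]
      show _ ≤ 2 * ((1 / 2 : ℝ) ^ (n₀ k) * Real.log ((GenContFract.of v).dens (M (n₀ k) + 1)))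
      have h7 := hlogdq (k + 1)
      have h8 : (0:ℝ) ≤ 1 / (2 * (GenContFract.of v).dens k) :=
        le_of_lt (one_div_pos.2 (by linarith [hdqpos k]))
      nlinarith [mul_le_mul h2 h1 h7 (by positivity : (0:ℝ) ≤ (1/2:ℝ)^(n₀ k))]
    calc ∑ k ∈ Finset.range K,
          Real.log ((GenContFract.of v).dens (k + 1)) / (GenContFract.of v).dens k
        ≤ ∑ k ∈ Finset.range K, 2 * u (n₀ k) := Finset.sum_le_sum fun k _ => hterm k
      _ = 2 * ∑ k ∈ Finset.range K, u (n₀ k) := by rw [Finset.mul_sum]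
      _ ≤ 2 * (2 * ∑' n, u n) := by
          have := BryunoAux.sum_comp_le u hu0 hu n₀ hn₀mono hn₀step K
          linarith
  · -- classical Bryuno implies Bryuno
    intro hD
    have hu : Summable u := by
      apply summable_of_sum_range_le (c := 2 * ∑' j, Real.log ((GenContFract.of v).dens (j + 1)) /
        (GenContFract.of v).dens j) hu0
      intro N
      have := BryunoAux.sum_weighted_le
        (fun j => Real.log ((GenContFract.of v).dens (j + 1))) (fun j => hlogdq (j + 1))
        M n₀ hn₀M
        (fun j => Real.log ((GenContFract.of v).dens (j + 1)) / (GenContFract.of v).dens j)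
        hD0 ?_ hD N
      · exact this
      · intro j
        have h3 : (GenContFract.of v).dens j ≤ (2 : ℝ) ^ (n₀ j) := by
          have h4 := hn₀spec j
          have h5 : ((Q j : ℤ) : ℝ) ≤ (((2 : ℤ) ^ (n₀ j) : ℤ) : ℝ) := by exact_mod_cast h4
          rw [hQ' j] at h5
          calc (GenContFract.of v).dens j ≤ (((2:ℤ)^(n₀ j) : ℤ) : ℝ) := h5
            _ = (2:ℝ)^(n₀ j) := by push_cast; ring
        have h2 : (1 / 2 : ℝ) ^ (n₀ j) ≤ 1 / (GenContFract.of v).dens j := by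
          rw [div_pow, one_pow]
          exact one_div_le_one_div_of_le (hdqpos j) h3
        have h7 := hlogdq (j + 1)
        have h8 : Real.log ((GenContFract.of v).dens (j + 1)) / (GenContFract.of v).dens j =
            (1 / (GenContFract.of v).dens j) * Real.log ((GenContFract.of v).dens (j + 1)) := by
          field_simp
        show 2 * (1/2:ℝ)^(n₀ j) * Real.log ((GenContFract.of v).dens (j+1)) ≤
          2 * (Real.log ((GenContFract.of v).dens (j + 1)) / (GenContFract.of v).dens j)
        rw [h8]
        nlinarith [mul_le_mul_of_nonneg_right h2 h7]
    -- conclude Summable for the Bryuno function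
    apply Summable.of_abs
    apply Summable.of_nonneg_of_le (fun n => abs_nonneg _) _ (hu.add hgeo)
    intro n
    have h1 := hlog_up n
    have h2 := hlog_bnd n
    have h3 : |Real.log (1 / alphan2 (ω₁, ω₂) n)| ≤
        Real.log ((GenContFract.of v).dens (M n + 1)) + c := by
      rw [abs_le]
      constructor
      · have := hlogdq (M n + 1)
        linarith
      · exact h1
    rw [abs_mul, abs_of_nonneg (by positivity : (0:ℝ) ≤ (1/2:ℝ)^n)]
    show (1/2:ℝ)^n * |Real.log (1 / alphan2 (ω₁, ω₂) n)| ≤ u n + c * (1/2)^n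
    rw [hudef]
    have h4 : (0:ℝ) ≤ (1/2:ℝ)^n := by positivity
    nlinarith
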